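/- Let p > 3 be prime and fix a, b ∈ F_p with a² ≠ 3b. Define S_λ = Σ_{x ∈ F_p} σ(x³ + a x² + b x + λ) for λ ∈ F_p. Then Σ_λ S_λ = 0 and (1/p)·Σ_λ S_λ² = p − 1 − σ(−3) − σ(a² − 3b). -/

import Mathlib

open Finset
variable {p : ℕ} [Fact p.Prime]

lemma hodd (hp : 3 < p) : ringChar (ZMod p) ≠ 2 := by
  rw [ZMod.ringChar_zmod_n]; omega

lemma lemK (hp : 3 < p) (c : ZMod p) (hc : c ≠ 0) :
    ∑ t : ZMod p, quadraticChar (ZMod p) (t * (t + c)) = -1 := by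
  classical
  have h0 : (∑ t : ZMod p, quadraticChar (ZMod p) (t * (t + c)))
      = ∑ t ∈ (univ : Finset (ZMod p)).erase 0, quadraticChar (ZMod p) (t * (t + c)) := by
    rw [Finset.sum_erase]
    simp
  rw [h0]
  have h2 : (∑ t ∈ (univ : Finset (ZMod p)).erase 0, quadraticChar (ZMod p) (t * (t + c)))
      = ∑ u ∈ (univ : Finset (ZMod p)).erase 1, quadraticChar (ZMod p) u := by
    refine Finset.sum_nbij' (fun t => 1 + c * t⁻¹) (fun u => c * (u - 1)⁻¹) ?_ ?_ ?_ ?_ ?_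
    · intro t ht
      simp only [mem_erase, mem_univ, and_true] at ht ⊢
      intro h
      apply ht
      have : c * t⁻¹ = 0 := by linear_combination h
      rcases mul_eq_zero.mp this with h' | h'
      · exact absurd h' hc
      · exact inv_eq_zero.mp h'
    · intro u hu
      simp only [mem_erase, mem_univ, and_true] at hu ⊢
      exact mul_ne_zero hc (inv_ne_zero (sub_ne_zero.mpr hu))
    · intro t ht
      simp only [mem_erase, mem_univ, and_true] at ht
      field_simp
      rw [show t + c - t = c by ring, div_self hc]
    · intro u hu
      simp only [mem_erase, mem_univ, and_true] at hu
      have h1 : u - 1 ≠ 0 := sub_ne_zero.mpr hu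
      field_simp
      ring
    · intro t ht
      simp only [mem_erase, mem_univ, and_true] at ht
      have h : t * (t + c) = t ^ 2 * (1 + c * t⁻¹) := by field_simp
      rw [h, map_mul, quadraticChar_sq_one' ht, one_mul]
  rw [h2, Finset.sum_erase_eq_sub (mem_univ 1), quadraticChar_sum_zero (hodd hp), map_one]
  ring

lemma lemP (hp : 3 < p) (u v : ZMod p) :
    ∑ l : ZMod p, quadraticChar (ZMod p) ((u + l) * (v + l)) =
      if u = v then (p : ℤ) - 1 else -1 := by
  classical
  split_ifs with h
  · subst h
    have h1 : ∀ l : ZMod p, quadraticChar (ZMod p) ((u + l) * (u + l))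
        = 1 - (if l = -u then (1 : ℤ) else 0) := by
      intro l
      by_cases hl : l = -u
      · simp [hl]
      · have : u + l ≠ 0 := by
          intro h'; apply hl; linear_combination h'
        rw [← sq, quadraticChar_sq_one' this]
        simp [hl]
    rw [Finset.sum_congr rfl fun l _ => h1 l, Finset.sum_sub_distrib,
      Finset.sum_ite_eq' univ (-u) (fun _ => (1:ℤ))]
    simp [Finset.card_univ, ZMod.card]
  · have hc : v - u ≠ 0 := sub_ne_zero.mpr (fun h' => h h'.symm)
    have h2 : (∑ l : ZMod p, quadraticChar (ZMod p) ((u + l) * (v + l)))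
        = ∑ t : ZMod p, quadraticChar (ZMod p) (t * (t + (v - u))) := by
      refine Fintype.sum_equiv (Equiv.addLeft u) _ _ fun l => ?_
      simp only [Equiv.coe_addLeft]
      ring_nf
    rw [h2, lemK hp _ hc]

lemma sqcount (hp : 3 < p) (e d : ZMod p) :
    ∑ x : ZMod p, (if (x + e) ^ 2 = d then (1 : ℤ) else 0)
      = quadraticChar (ZMod p) d + 1 := by
  classical
  have h1 : (∑ x : ZMod p, if (x + e) ^ 2 = d then (1 : ℤ) else 0)
      = ∑ x : ZMod p, if x ^ 2 = d then (1 : ℤ) else 0 := by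
    refine Fintype.sum_equiv (Equiv.addRight e) _ _ fun x => ?_
    simp only [Equiv.coe_addRight]
    exact if_congr Iff.rfl rfl rfl
  rw [h1, Finset.sum_boole]
  have := quadraticChar_card_sqrts (hodd hp) d
  rw [Set.toFinset_setOf] at this
  rw [← this]

lemma lemT (hp : 3 < p) (d : ZMod p) (hd : d ≠ 0) :
    ∑ z : ZMod p, quadraticChar (ZMod p) (z ^ 2 - d) = -1 := by
  classical
  have key : (∑ z : ZMod p, quadraticChar (ZMod p) (z ^ 2 - d))
      = ∑ t : ZMod p, ((univ.filter fun z : ZMod p => z ^ 2 = t).card : ℤ)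
          * quadraticChar (ZMod p) (t - d) := by
    rw [← Finset.sum_fiberwise_of_maps_to (g := fun z : ZMod p => z ^ 2)
        (fun i _ => Finset.mem_univ _) (fun z => quadraticChar (ZMod p) (z ^ 2 - d))]
    refine Finset.sum_congr rfl fun t _ => ?_
    have he : (∑ z ∈ univ.filter fun z : ZMod p => z ^ 2 = t,
          quadraticChar (ZMod p) (z ^ 2 - d))
        = ∑ _z ∈ univ.filter fun z : ZMod p => z ^ 2 = t, quadraticChar (ZMod p) (t - d) :=
      Finset.sum_congr rfl fun z hz => by rw [(Finset.mem_filter.mp hz).2]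
    rw [he, Finset.sum_const, nsmul_eq_mul]
  have hcard : ∀ t : ZMod p, ((univ.filter fun z : ZMod p => z ^ 2 = t).card : ℤ)
      = quadraticChar (ZMod p) t + 1 := by
    intro t
    have := quadraticChar_card_sqrts (hodd hp) t
    rwa [Set.toFinset_setOf] at this
  rw [key, Finset.sum_congr rfl fun t _ => by rw [hcard t]]
  have expand : (∑ t : ZMod p, (quadraticChar (ZMod p) t + 1) * quadraticChar (ZMod p) (t - d))
      = (∑ t : ZMod p, quadraticChar (ZMod p) (t * (t + (-d))))
        + ∑ t : ZMod p, quadraticChar (ZMod p) (t - d) := by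
    rw [← Finset.sum_add_distrib]
    refine Finset.sum_congr rfl fun t _ => ?_
    rw [show t * (t + -d) = t * (t - d) by ring, map_mul]
    try ring
  rw [expand, lemK hp (-d) (neg_ne_zero.mpr hd)]
  have shift : (∑ t : ZMod p, quadraticChar (ZMod p) (t - d)) = 0 := by
    rw [← quadraticChar_sum_zero (hodd hp)]
    refine Fintype.sum_equiv (Equiv.subRight d) _ _ fun t => rfl
  rw [shift]
  ring

lemma sqcount' (hp : 3 < p) (g e d : ZMod p) (hg : g ≠ 0) :
    ∑ x : ZMod p, (if (g * x + e) ^ 2 = d then (1 : ℤ) else 0)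
      = quadraticChar (ZMod p) d + 1 := by
  classical
  have h1 : (∑ x : ZMod p, if (g * x + e) ^ 2 = d then (1 : ℤ) else 0)
      = ∑ z : ZMod p, if (z + e) ^ 2 = d then (1 : ℤ) else 0 := by
    refine Fintype.sum_equiv (Equiv.mulLeft₀ g hg) _ _ fun x => ?_
    simp only [Equiv.mulLeft₀_apply]
  rw [h1]
  exact sqcount hp e d

theorem stmt3 (p : ℕ) [Fact p.Prime] (hp : 3 < p) (a b : ZMod p)
    (hab : a ^ 2 ≠ 3 * b) :
    (∑ l : ZMod p, ∑ x : ZMod p, quadraticChar (ZMod p) (x ^ 3 + a * x ^ 2 + b * x + l)) = 0 ∧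
    (((∑ l : ZMod p, (∑ x : ZMod p, quadraticChar (ZMod p) (x ^ 3 + a * x ^ 2 + b * x + l)) ^ 2 : ℤ) : ℚ) / p)
      = p - 1 - quadraticChar (ZMod p) (-3) - quadraticChar (ZMod p) (a ^ 2 - 3 * b) := by
  classical
  set χ := quadraticChar (ZMod p) with hχ
  have h2 : (2 : ZMod p) ≠ 0 := by
    intro h
    have h' : ((2 : ℕ) : ZMod p) = 0 := by exact_mod_cast h
    rw [ZMod.natCast_eq_zero_iff] at h'
    exact absurd (Nat.le_of_dvd (by norm_num) h') (by omega)
  have h3 : (3 : ZMod p) ≠ 0 := by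
    intro h
    have h' : ((3 : ℕ) : ZMod p) = 0 := by exact_mod_cast h
    rw [ZMod.natCast_eq_zero_iff] at h'
    exact absurd (Nat.le_of_dvd (by norm_num) h') (by omega)
  have h4 : (4 : ZMod p) ≠ 0 := by
    rw [show (4 : ZMod p) = 2 * 2 by norm_num]; exact mul_ne_zero h2 h2
  have hd : a ^ 2 - 3 * b ≠ 0 := sub_ne_zero.mpr hab
  have hchi9 : χ (9 : ZMod p) = 1 := by
    rw [show (9 : ZMod p) = 3 ^ 2 by norm_num]
    exact quadraticChar_sq_one' h3
  constructor
  · rw [Finset.sum_comm]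
    refine Finset.sum_eq_zero fun x _ => ?_
    rw [← quadraticChar_sum_zero (hodd hp)]
    refine Fintype.sum_equiv (Equiv.addLeft (x ^ 3 + a * x ^ 2 + b * x)) _ _ fun l => ?_
    simp only [Equiv.coe_addLeft, hχ]
  · -- second part
    have hfactor : ∀ x y : ZMod p,
        (x ^ 3 + a * x ^ 2 + b * x = y ^ 3 + a * y ^ 2 + b * y)
          ↔ (x = y ∨ x ^ 2 + x * y + y ^ 2 + a * x + a * y + b = 0) := by
      intro x y
      rw [← sub_eq_zero,
        show x ^ 3 + a * x ^ 2 + b * x - (y ^ 3 + a * y ^ 2 + b * y)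
          = (x - y) * (x ^ 2 + x * y + y ^ 2 + a * x + a * y + b) by ring,
        mul_eq_zero, sub_eq_zero]
    have stepA : (∑ l : ZMod p, (∑ x : ZMod p, χ (x ^ 3 + a * x ^ 2 + b * x + l)) ^ 2)
        = ∑ x : ZMod p, ∑ y : ZMod p,
            (if x ^ 3 + a * x ^ 2 + b * x = y ^ 3 + a * y ^ 2 + b * y then (p : ℤ) - 1 else -1) := by
      have h1 : ∀ l : ZMod p, (∑ x : ZMod p, χ (x ^ 3 + a * x ^ 2 + b * x + l)) ^ 2
          = ∑ x : ZMod p, ∑ y : ZMod p,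
              χ ((x ^ 3 + a * x ^ 2 + b * x + l) * (y ^ 3 + a * y ^ 2 + b * y + l)) := by
        intro l
        rw [sq, Finset.sum_mul_sum]
        exact Finset.sum_congr rfl fun x _ => Finset.sum_congr rfl fun y _ => (map_mul _ _ _).symm
      rw [Finset.sum_congr rfl fun l _ => h1 l, Finset.sum_comm]
      refine Finset.sum_congr rfl fun x _ => ?_
      rw [Finset.sum_comm]
      exact Finset.sum_congr rfl fun y _ =>
        lemP hp (x ^ 3 + a * x ^ 2 + b * x) (y ^ 3 + a * y ^ 2 + b * y)
    have pointwise : ∀ x y : ZMod p,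
        (if x ^ 3 + a * x ^ 2 + b * x = y ^ 3 + a * y ^ 2 + b * y then (p : ℤ) - 1 else -1)
          = (p : ℤ) * ((if x = y then (1:ℤ) else 0)
              + (if x ^ 2 + x * y + y ^ 2 + a * x + a * y + b = 0 then (1:ℤ) else 0)
              - (if x = y then (if x ^ 2 + x * y + y ^ 2 + a * x + a * y + b = 0
                  then (1:ℤ) else 0) else 0)) - 1 := by
      intro x y
      by_cases hxy : x = y <;>
        by_cases hq0 : x ^ 2 + x * y + y ^ 2 + a * x + a * y + b = 0 <;>
        simp [hfactor x y, hxy, hq0] <;> ring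
    have hA : (∑ x : ZMod p, ∑ y : ZMod p, if x = y then (1:ℤ) else 0) = (p : ℤ) := by
      rw [Finset.sum_congr rfl fun x _ => Finset.sum_ite_eq Finset.univ x (fun _ => (1:ℤ))]
      simp [Finset.card_univ, ZMod.card]
    have hB : (∑ x : ZMod p, ∑ y : ZMod p,
          if x ^ 2 + x * y + y ^ 2 + a * x + a * y + b = 0 then (1:ℤ) else 0)
        = (p : ℤ) - χ (-3) := by
      have inner : ∀ x : ZMod p, (∑ y : ZMod p,
          if x ^ 2 + x * y + y ^ 2 + a * x + a * y + b = 0 then (1:ℤ) else 0)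
          = χ ((x + a) ^ 2 - 4 * (x ^ 2 + a * x + b)) + 1 := by
        intro x
        have hcond : ∀ y : ZMod p,
            (x ^ 2 + x * y + y ^ 2 + a * x + a * y + b = 0)
              ↔ ((2 * y + (x + a)) ^ 2 = (x + a) ^ 2 - 4 * (x ^ 2 + a * x + b)) := by
          intro y
          constructor
          · intro h
            rw [show (2 * y + (x + a)) ^ 2 = (x + a) ^ 2 - 4 * (x ^ 2 + a * x + b)
                + 4 * (x ^ 2 + x * y + y ^ 2 + a * x + a * y + b) by ring, h]
            ring
          · intro h
            have h' : (4 : ZMod p) * (x ^ 2 + x * y + y ^ 2 + a * x + a * y + b) = 0 := by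
              linear_combination h
            rcases mul_eq_zero.mp h' with h'' | h''
            · exact absurd h'' h4
            · exact h''
        rw [Finset.sum_congr rfl fun y _ => by rw [if_congr (hcond y) rfl rfl]]
        exact sqcount' hp 2 (x + a) _ h2
      rw [Finset.sum_congr rfl fun x _ => inner x, Finset.sum_add_distrib]
      have hval : ∀ x : ZMod p, χ ((x + a) ^ 2 - 4 * (x ^ 2 + a * x + b))
          = χ (-3) * χ ((3 * x + a) ^ 2 - 4 * (a ^ 2 - 3 * b)) := by
        intro x
        calc χ ((x + a) ^ 2 - 4 * (x ^ 2 + a * x + b))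
            = χ 9 * χ ((x + a) ^ 2 - 4 * (x ^ 2 + a * x + b)) := by rw [hchi9, one_mul]
          _ = χ (9 * ((x + a) ^ 2 - 4 * (x ^ 2 + a * x + b))) := (map_mul _ _ _).symm
          _ = χ (-3 * ((3 * x + a) ^ 2 - 4 * (a ^ 2 - 3 * b))) := by ring_nf
          _ = χ (-3) * χ ((3 * x + a) ^ 2 - 4 * (a ^ 2 - 3 * b)) := map_mul _ _ _
      rw [Finset.sum_congr rfl fun x _ => hval x, ← Finset.mul_sum]
      have he : (4 : ZMod p) * (a ^ 2 - 3 * b) ≠ 0 := mul_ne_zero h4 hd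
      have hshift : (∑ x : ZMod p, χ ((3 * x + a) ^ 2 - 4 * (a ^ 2 - 3 * b)))
          = ∑ z : ZMod p, χ (z ^ 2 - 4 * (a ^ 2 - 3 * b)) := by
        refine Fintype.sum_equiv ((Equiv.mulLeft₀ (3 : ZMod p) h3).trans
          (Equiv.addRight a)) _ _ fun x => ?_
        simp only [Equiv.trans_apply, Equiv.mulLeft₀_apply, Equiv.coe_addRight]
      rw [hshift, lemT hp _ he]
      simp [Finset.card_univ, ZMod.card]
      ring
    have hC : (∑ x : ZMod p, ∑ y : ZMod p,
          if x = y then (if x ^ 2 + x * y + y ^ 2 + a * x + a * y + b = 0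
            then (1:ℤ) else 0) else 0)
        = χ (a ^ 2 - 3 * b) + 1 := by
      have inner : ∀ x : ZMod p, (∑ y : ZMod p,
          if x = y then (if x ^ 2 + x * y + y ^ 2 + a * x + a * y + b = 0
            then (1:ℤ) else 0) else 0)
          = if x ^ 2 + x * x + x ^ 2 + a * x + a * x + b = 0 then (1:ℤ) else 0 :=
        fun x => (Finset.sum_ite_eq Finset.univ x fun y =>
          if x ^ 2 + x * y + y ^ 2 + a * x + a * y + b = 0 then (1:ℤ) else 0).trans
          (if_pos (Finset.mem_univ x))
      rw [Finset.sum_congr rfl fun x _ => inner x]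
      have hcond : ∀ x : ZMod p,
          (x ^ 2 + x * x + x ^ 2 + a * x + a * x + b = 0)
            ↔ ((3 * x + a) ^ 2 = a ^ 2 - 3 * b) := by
        intro x
        constructor
        · intro h
          rw [show (3 * x + a) ^ 2 = a ^ 2 - 3 * b
              + 3 * (x ^ 2 + x * x + x ^ 2 + a * x + a * x + b) by ring, h]
          ring
        · intro h
          have h' : (3 : ZMod p) * (x ^ 2 + x * x + x ^ 2 + a * x + a * x + b) = 0 := by
            linear_combination h
          rcases mul_eq_zero.mp h' with h'' | h''
          · exact absurd h'' h3
          · exact h''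
      rw [Finset.sum_congr rfl fun x _ => by rw [if_congr (hcond x) rfl rfl]]
      exact sqcount' hp 3 a _ h3
    have key : (∑ l : ZMod p, (∑ x : ZMod p, χ (x ^ 3 + a * x ^ 2 + b * x + l)) ^ 2)
        = (p : ℤ) * ((p : ℤ) - 1 - χ (-3) - χ (a ^ 2 - 3 * b)) := by
      rw [stepA, Finset.sum_congr rfl fun x _ => Finset.sum_congr rfl fun y _ => pointwise x y]
      simp only [Finset.sum_sub_distrib, Finset.sum_add_distrib, ← Finset.mul_sum,
        Finset.sum_const, Finset.card_univ, ZMod.card, nsmul_eq_mul, mul_one]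
      linear_combination (p : ℤ) * hA + (p : ℤ) * hB - (p : ℤ) * hC
    rw [key]
    have hp0 : (p : ℚ) ≠ 0 := Nat.cast_ne_zero.mpr (by omega)
    push_cast
    field_simp
    try ring
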